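/- For any nonzero complex number s, the 9×9 matrix Δ(s) (as defined: diagonal -2, ones at symmetric positions (1,2),(3,4),(4,5),(5,6),(6,7),(7,8),(8,9),(1,9), entry (2,3) = 1/s, entry (3,2) = s) satisfies: the rank of Δ(s) is at least 8 for all s ≠ 0. -/

import Mathlib

open Matrix

/-- The parametrized 9×9 matrix of the Ã₈ local cohomology computation:
diagonal -2; entries 1 at the symmetric positions
(1,2),(3,4),(4,5),(5,6),(6,7),(7,8),(8,9),(1,9); entry (2,3) = s⁻¹ and
entry (3,2) = s; all other entries 0. -/
noncomputable def DeltaA8 (s : ℂ) : Matrix (Fin 9) (Fin 9) ℂ :=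
  !![-2,   1,   0,  0,  0,  0,  0,  0,  1;
      1,  -2, s⁻¹,  0,  0,  0,  0,  0,  0;
      0,   s,  -2,  1,  0,  0,  0,  0,  0;
      0,   0,   1, -2,  1,  0,  0,  0,  0;
      0,   0,   0,  1, -2,  1,  0,  0,  0;
      0,   0,   0,  0,  1, -2,  1,  0,  0;
      0,   0,   0,  0,  0,  1, -2,  1,  0;
      0,   0,   0,  0,  0,  0,  1, -2,  1;
      1,   0,   0,  0,  0,  0,  0,  1, -2]

/-- integer 8×8 minor of `DeltaA8` obtained by deleting row 1 and column 1. -/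
def DeltaA8.SZ : Matrix (Fin 8) (Fin 8) ℤ :=
  !![-2, 0, 0, 0, 0, 0, 0, 1;
      0,-2, 1, 0, 0, 0, 0, 0;
      0, 1,-2, 1, 0, 0, 0, 0;
      0, 0, 1,-2, 1, 0, 0, 0;
      0, 0, 0, 1,-2, 1, 0, 0;
      0, 0, 0, 0, 1,-2, 1, 0;
      0, 0, 0, 0, 0, 1,-2, 1;
      1, 0, 0, 0, 0, 0, 1,-2]

/-- nine times the inverse of `DeltaA8.SZ`. -/
def DeltaA8.TZ : Matrix (Fin 8) (Fin 8) ℤ :=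
  !![-8,-1,-2,-3,-4,-5,-6,-7;
     -1,-8,-7,-6,-5,-4,-3,-2;
     -2,-7,-14,-12,-10,-8,-6,-4;
     -3,-6,-12,-18,-15,-12,-9,-6;
     -4,-5,-10,-15,-20,-16,-12,-8;
     -5,-4,-8,-12,-16,-20,-15,-10;
     -6,-3,-6,-9,-12,-15,-18,-12;
     -7,-2,-4,-6,-8,-10,-12,-14]

theorem DeltaA8.SZ_mul_TZ : DeltaA8.SZ * DeltaA8.TZ = (9 : ℤ) • 1 := by decide

/-- the row/column selection skipping index 1. -/
def DeltaA8.rr : Fin 8 → Fin 9 := ![0, 2, 3, 4, 5, 6, 7, 8]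

theorem DeltaA8.isUnit_SZmap : IsUnit (DeltaA8.SZ.map ⇑(Int.castRingHom ℂ)) := by
  apply (Matrix.isUnit_iff_isUnit_det _).mpr (Matrix.isUnit_det_of_right_inverse (B := (9 : ℂ)⁻¹ • DeltaA8.TZ.map ⇑(Int.castRingHom ℂ)) ?_)
  have h : DeltaA8.SZ.map ⇑(Int.castRingHom ℂ) * DeltaA8.TZ.map ⇑(Int.castRingHom ℂ)
      = (9 : ℂ) • 1 := by
    rw [← Matrix.map_mul, DeltaA8.SZ_mul_TZ]
    ext i j
    simp only [Matrix.map_apply, Matrix.smul_apply, Matrix.one_apply, smul_eq_mul,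
      apply_ite (Int.castRingHom ℂ)]
    split_ifs <;> norm_num
  rw [Matrix.mul_smul, h, smul_smul]
  norm_num

theorem DeltaA8.submatrix_eq (s : ℂ) :
    (DeltaA8 s).submatrix DeltaA8.rr DeltaA8.rr = DeltaA8.SZ.map ⇑(Int.castRingHom ℂ) := by
  ext i j
  fin_cases i <;> fin_cases j <;>
    norm_num [DeltaA8, DeltaA8.SZ, DeltaA8.rr] <;> rfl

theorem DeltaA8_rank_ge_eight (s : ℂ) (hs : s ≠ 0) :
    8 ≤ (DeltaA8 s).rank := by
  have hS : ((DeltaA8 s).submatrix DeltaA8.rr DeltaA8.rr).rank = 8 := by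
    rw [DeltaA8.submatrix_eq s, Matrix.rank_of_isUnit _ DeltaA8.isUnit_SZmap,
      Fintype.card_fin]
  have h2 := Matrix.rank_mul_le_right
    ((1 : Matrix (Fin 9) (Fin 9) ℂ).submatrix DeltaA8.rr (Equiv.refl (Fin 9)))
    ((DeltaA8 s).submatrix (Equiv.refl (Fin 9)) id)
  rw [Matrix.submatrix_mul_equiv, Matrix.one_mul] at h2
  simp only [Equiv.coe_refl, Matrix.submatrix_id_id] at h2
  have h1 := Matrix.rank_mul_le_left
    (((DeltaA8 s).submatrix DeltaA8.rr id).submatrix id (Equiv.refl (Fin 9)))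
    ((1 : Matrix (Fin 9) (Fin 9) ℂ).submatrix (Equiv.refl (Fin 9)) DeltaA8.rr)
  rw [Matrix.submatrix_mul_equiv, Matrix.mul_one] at h1
  simp only [Equiv.coe_refl, Matrix.submatrix_id_id, Matrix.submatrix_submatrix,
    Function.comp_id, Function.id_comp] at h1
  omega
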